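/- Fix an integer d ≥ 3, δ ∈ (0, 2/(d−2)], β > 0, and ε ∈ (0,1) with 4^{d−2} ε^{(d−2)δ} ≤ 1/2. Then there is C = C(d) such that: if 0 < β ≤ d−2, then Var( Y_{ε,0} 1_{ρ_0 < T_ε} ) + E[ ρ^{2(d−2)} 1_{ρ < T_ε} ] ≤ C ε^{−(2/(d−2) − δ)(d−2−β)}; and if β ≥ d−2, then Var( Y_{ε,0} 1_{ρ_0 < T_ε} ) + E[ ρ^{2(d−2)} 1_{ρ < T_ε} ] ≤ C. -/
import Mathlib


open MeasureTheory ProbabilityTheory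

noncomputable section

/-- The truncation threshold `T_ε := ε^{−2/(d−2)+δ}`. -/
def Ttrunc (d : ℕ) (ε δ : ℝ) : ℝ := ε ^ (-(2 / ((d : ℝ) - 2)) + δ)

/-- `Y_{ε} 1_{ρ < T_ε}` as a function of the mark:
`x ↦ x^{d−2} / (1 − 4^{d−2} ε² x^{d−2})` on `{x < T_ε}`, `0` otherwise. -/
def Yind (d : ℕ) (ε δ : ℝ) : ℝ → ℝ :=
  Set.indicator {x | x < Ttrunc d ε δ}
    (fun x => x ^ ((d : ℝ) - 2) / (1 - 4 ^ ((d : ℝ) - 2) * ε ^ 2 * x ^ ((d : ℝ) - 2)))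

/-- bounds on `Var(Y_{ε,0} 1_{ρ₀<T_ε}) + E[ρ^{2(d−2)} 1_{ρ<T_ε}]`, depending
on whether `β ≤ d−2` or `β ≥ d−2`, with `C = C(d)`. -/
theorem truncated_variance_moment_bound (d : ℕ) (hd : 3 ≤ d) :
    ∃ C > 0, ∀ (δ β ε : ℝ),
      δ ∈ Set.Ioc (0 : ℝ) (2 / ((d : ℝ) - 2)) → 0 < β →
      ε ∈ Set.Ioo (0 : ℝ) 1 →
      (4 : ℝ) ^ ((d : ℝ) - 2) * ε ^ (((d : ℝ) - 2) * δ) ≤ 1 / 2 →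
      ∀ (Ω : Type) (_ : MeasurableSpace Ω) (P : Measure Ω), IsProbabilityMeasure P →
      ∀ (ρ₀ : Ω → ℝ), Measurable ρ₀ → (∀ ω, 0 ≤ ρ₀ ω) →
        (∫⁻ ω, ENNReal.ofReal (ρ₀ ω ^ ((d : ℝ) - 2 + β)) ∂P ≤ 1) →
        ((β ≤ (d : ℝ) - 2 →
            variance (fun ω => Yind d ε δ (ρ₀ ω)) P
              + (∫ ω, Set.indicator {x | x < Ttrunc d ε δ}
                  (fun x => x ^ (2 * ((d : ℝ) - 2))) (ρ₀ ω) ∂P)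
            ≤ C * ε ^ (-(2 / ((d : ℝ) - 2) - δ) * ((d : ℝ) - 2 - β))) ∧
         ((d : ℝ) - 2 ≤ β →
            variance (fun ω => Yind d ε δ (ρ₀ ω)) P
              + (∫ ω, Set.indicator {x | x < Ttrunc d ε δ}
                  (fun x => x ^ (2 * ((d : ℝ) - 2))) (ρ₀ ω) ∂P)
            ≤ C)) := by
  refine ⟨10, by norm_num, ?_⟩
  intro δ β ε hδ hβ hε hsmall Ω mΩ P hP ρ₀ hρmeas hρnn hmom
  obtain ⟨hε0, hε1⟩ := hε
  obtain ⟨hδ0, hδ2⟩ := hδ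
  have hd3 : (3 : ℝ) ≤ (d : ℝ) := by exact_mod_cast hd
  set m : ℝ := (d : ℝ) - 2 with hmdef
  have hm1 : (1 : ℝ) ≤ m := by simp only [hmdef]; linarith
  have hm0 : (0 : ℝ) < m := by linarith
  set e : ℝ := -(2 / m) + δ with hedef
  have he0 : e ≤ 0 := by simp only [hedef]; linarith
  set T : ℝ := Ttrunc d ε δ with hTdef
  have hTe : T = ε ^ e := rfl
  have hT1 : (1 : ℝ) ≤ T := by
    rw [hTe]
    calc (1 : ℝ) = ε ^ (0 : ℝ) := (Real.rpow_zero ε).symm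
    _ ≤ ε ^ e := Real.rpow_le_rpow_of_exponent_ge hε0 hε1.le he0
  have hTpos : (0 : ℝ) < T := lt_of_lt_of_le one_pos hT1
  -- ε² T^m = ε^(m δ)
  have hεTm : ε ^ 2 * T ^ m = ε ^ (m * δ) := by
    rw [hTe, ← Real.rpow_natCast ε 2, ← Real.rpow_mul hε0.le, ← Real.rpow_add hε0]
    congr 1
    push_cast
    simp only [hedef]
    field_simp
    ring
  -- denominator bound
  have hden : ∀ x : ℝ, 0 ≤ x → x < T →
      (1 : ℝ) / 2 ≤ 1 - 4 ^ m * ε ^ 2 * x ^ m := by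
    intro x hx hxT
    have hxm : x ^ m ≤ T ^ m := Real.rpow_le_rpow hx hxT.le hm0.le
    have h4 : (0 : ℝ) < (4 : ℝ) ^ m := Real.rpow_pos_of_pos (by norm_num) m
    have hε2 : (0 : ℝ) ≤ ε ^ 2 := sq_nonneg ε
    have : 4 ^ m * ε ^ 2 * x ^ m ≤ 4 ^ m * ε ^ 2 * T ^ m := by
      apply mul_le_mul_of_nonneg_left hxm (by positivity)
    have h2 : 4 ^ m * ε ^ 2 * T ^ m = 4 ^ m * ε ^ (m * δ) := by
      rw [mul_assoc, hεTm]
    linarith [hsmall]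
  have hYnn : ∀ x : ℝ, 0 ≤ x → 0 ≤ Yind d ε δ x := by
    intro x hx
    unfold Yind
    rw [← hTdef, ← hmdef]
    by_cases hxT : x < T
    · have hmem : x ∈ {y : ℝ | y < T} := hxT
      rw [Set.indicator_of_mem hmem]
      have := hden x hx hxT
      exact div_nonneg (Real.rpow_nonneg hx _) (by linarith)
    · have hnm : x ∉ {y : ℝ | y < T} := hxT
      rw [Set.indicator_of_notMem hnm]
  -- squared bound
  have hYsq : ∀ x : ℝ, 0 ≤ x → (Yind d ε δ x) ^ 2
      ≤ 4 * Set.indicator {x | x < T} (fun x => x ^ (2 * m)) x := by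
    intro x hx
    unfold Yind
    rw [← hTdef, ← hmdef]
    by_cases hxT : x < T
    · have hmem : x ∈ {y : ℝ | y < T} := hxT
      rw [Set.indicator_of_mem hmem, Set.indicator_of_mem hmem]
      have hD := hden x hx hxT
      have hDpos : (0 : ℝ) < 1 - 4 ^ m * ε ^ 2 * x ^ m := by linarith
      have hxmnn : (0 : ℝ) ≤ x ^ m := Real.rpow_nonneg hx _
      have hsq : (x ^ m) ^ 2 = x ^ (2 * m) := by
        rw [← Real.rpow_natCast (x ^ m) 2, ← Real.rpow_mul hx]
        push_cast
        ring_nf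
      have h1 : (x ^ m / (1 - 4 ^ m * ε ^ 2 * x ^ m)) ^ 2
          = (x ^ m) ^ 2 / (1 - 4 ^ m * ε ^ 2 * x ^ m) ^ 2 := by
        rw [div_pow]
      rw [h1, ← hsq]
      have hDsq : (1 : ℝ) / 4 ≤ (1 - 4 ^ m * ε ^ 2 * x ^ m) ^ 2 := by nlinarith
      calc (x ^ m) ^ 2 / (1 - 4 ^ m * ε ^ 2 * x ^ m) ^ 2
          ≤ (x ^ m) ^ 2 / (1 / 4) :=
            div_le_div_of_nonneg_left (sq_nonneg _) (by norm_num) hDsq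
      _ = 4 * (x ^ m) ^ 2 := by ring
    · have hnm : x ∉ {y : ℝ | y < T} := hxT
      rw [Set.indicator_of_notMem hnm, Set.indicator_of_notMem hnm]
      norm_num
  -- bound on Y
  have hYbd : ∀ x : ℝ, 0 ≤ x → Yind d ε δ x ≤ 2 * T ^ m := by
    intro x hx
    unfold Yind
    rw [← hTdef, ← hmdef]
    by_cases hxT : x < T
    · have hmem : x ∈ {y : ℝ | y < T} := hxT
      rw [Set.indicator_of_mem hmem]
      have hD := hden x hx hxT
      have hDpos : (0 : ℝ) < 1 - 4 ^ m * ε ^ 2 * x ^ m := by linarith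
      have hxm : x ^ m ≤ T ^ m := Real.rpow_le_rpow hx hxT.le hm0.le
      have hxmnn : (0 : ℝ) ≤ x ^ m := Real.rpow_nonneg hx _
      calc x ^ m / (1 - 4 ^ m * ε ^ 2 * x ^ m) ≤ x ^ m / (1 / 2) :=
            div_le_div_of_nonneg_left hxmnn (by norm_num) hD
      _ = 2 * x ^ m := by ring
      _ ≤ 2 * T ^ m := by linarith
    · have hnm : x ∉ {y : ℝ | y < T} := hxT
      rw [Set.indicator_of_notMem hnm]
      positivity
  -- measurability
  have hmnn : (0 : ℝ) ≤ m := hm0.le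
  have hYmeas : Measurable (Yind d ε δ) := by
    unfold Yind
    exact Measurable.indicator
      (((Real.continuous_rpow_const hmnn).measurable).div
        (measurable_const.sub
          (measurable_const.mul (Real.continuous_rpow_const hmnn).measurable)))
      (measurableSet_lt measurable_id measurable_const)
  -- the moment function
  set Φ : Ω → ℝ := fun ω => ρ₀ ω ^ (m + β) with hΦdef
  have hmβ0 : (0 : ℝ) < m + β := by linarith
  have hΦmeas : Measurable Φ :=
    (Real.continuous_rpow_const hmβ0.le).measurable.comp hρmeas
  have hΦnn : ∀ ω, 0 ≤ Φ ω := fun ω => Real.rpow_nonneg (hρnn ω) _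
  have hΦint : Integrable Φ P := by
    refine ⟨hΦmeas.aestronglyMeasurable, ?_⟩
    rw [hasFiniteIntegral_iff_ofReal (Filter.Eventually.of_forall hΦnn)]
    exact lt_of_le_of_lt hmom ENNReal.one_lt_top
  have hΦ1 : ∫ ω, Φ ω ∂P ≤ 1 := by
    rw [integral_eq_lintegral_of_nonneg_ae (Filter.Eventually.of_forall hΦnn)
      hΦmeas.aestronglyMeasurable]
    calc (∫⁻ ω, ENNReal.ofReal (Φ ω) ∂P).toReal ≤ (1 : ENNReal).toReal :=
          ENNReal.toReal_mono (by norm_num) hmom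
    _ = 1 := by simp
  -- the indicator function G
  set G : Ω → ℝ := (fun ω => Set.indicator {x : ℝ | x < T} (fun x => x ^ (2 * m)) (ρ₀ ω))
    with hGdef
  have hIndMeas : Measurable (Set.indicator {x : ℝ | x < T} (fun x => x ^ (2 * m))) :=
    Measurable.indicator
      (Real.continuous_rpow_const (by linarith : (0:ℝ) ≤ 2 * m)).measurable
      (measurableSet_lt measurable_id measurable_const)
  have hGmeas : Measurable G := hIndMeas.comp hρmeas
  have hGnn : ∀ ω, 0 ≤ G ω := by
    intro ω
    simp only [hGdef]
    by_cases hxT : ρ₀ ω < T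
    · have hmem : ρ₀ ω ∈ {y : ℝ | y < T} := hxT
      rw [Set.indicator_of_mem hmem]; exact Real.rpow_nonneg (hρnn ω) _
    · have hnm : ρ₀ ω ∉ {y : ℝ | y < T} := hxT
      rw [Set.indicator_of_notMem hnm]
  have hGbd : ∀ ω, G ω ≤ T ^ (2 * m) := by
    intro ω
    simp only [hGdef]
    by_cases hxT : ρ₀ ω < T
    · have hmem : ρ₀ ω ∈ {y : ℝ | y < T} := hxT
      rw [Set.indicator_of_mem hmem]
      exact Real.rpow_le_rpow (hρnn ω) hxT.le (by linarith)
    · have hnm : ρ₀ ω ∉ {y : ℝ | y < T} := hxT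
      rw [Set.indicator_of_notMem hnm]
      exact Real.rpow_nonneg hTpos.le _
  have hGint : Integrable G P := by
    refine (integrable_const (T ^ (2 * m))).mono' hGmeas.aestronglyMeasurable ?_
    refine Filter.Eventually.of_forall fun ω => ?_
    rw [Real.norm_eq_abs, abs_of_nonneg (hGnn ω)]
    exact hGbd ω
  -- the squared function
  have hsqmeas : Measurable fun ω => (Yind d ε δ (ρ₀ ω)) ^ 2 :=
    ((hYmeas.comp hρmeas).pow measurable_const)
  have hsqint : Integrable (fun ω => (Yind d ε δ (ρ₀ ω)) ^ 2) P := by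
    refine (integrable_const ((2 * T ^ m) ^ 2)).mono' hsqmeas.aestronglyMeasurable ?_
    refine Filter.Eventually.of_forall fun ω => ?_
    rw [Real.norm_eq_abs, abs_of_nonneg (sq_nonneg _)]
    have h1 := hYnn (ρ₀ ω) (hρnn ω)
    have h2 := hYbd (ρ₀ ω) (hρnn ω)
    nlinarith
  -- variance bound
  have hvar : variance (fun ω => Yind d ε δ (ρ₀ ω)) P
      ≤ ∫ ω, (Yind d ε δ (ρ₀ ω)) ^ 2 ∂P := by
    have := variance_le_expectation_sq (μ := P)
      (X := fun ω => Yind d ε δ (ρ₀ ω)) (hYmeas.comp hρmeas).aestronglyMeasurable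
    simpa [Pi.pow_apply] using this
  have hsqle : ∫ ω, (Yind d ε δ (ρ₀ ω)) ^ 2 ∂P ≤ 4 * ∫ ω, G ω ∂P := by
    calc ∫ ω, (Yind d ε δ (ρ₀ ω)) ^ 2 ∂P ≤ ∫ ω, 4 * G ω ∂P :=
          integral_mono hsqint (hGint.const_mul 4) fun ω => hYsq (ρ₀ ω) (hρnn ω)
    _ = 4 * ∫ ω, G ω ∂P := integral_const_mul 4 G
  have hGintnn : 0 ≤ ∫ ω, G ω ∂P := integral_nonneg hGnn
  have hmain : variance (fun ω => Yind d ε δ (ρ₀ ω)) P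
      + (∫ ω, Set.indicator {x | x < T} (fun x => x ^ (2 * m)) (ρ₀ ω) ∂P)
      ≤ 5 * ∫ ω, G ω ∂P := by
    have : (∫ ω, Set.indicator {x | x < T} (fun x => x ^ (2 * m)) (ρ₀ ω) ∂P)
        = ∫ ω, G ω ∂P := rfl
    rw [this]
    linarith
  constructor
  · -- case β ≤ m
    intro hβm
    have hG1 : ∀ ω, G ω ≤ T ^ (m - β) * Φ ω := by
      intro ω
      simp only [hGdef, hΦdef]
      set x := ρ₀ ω with hxdef
      have hx : 0 ≤ x := hρnn ω
      by_cases hxT : x < T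
      · have hmem : x ∈ {y : ℝ | y < T} := hxT
        rw [Set.indicator_of_mem hmem]
        have h2m : 2 * m = (m + β) + (m - β) := by ring
        have hsplit : x ^ (2 * m) = x ^ (m + β) * x ^ (m - β) := by
          rw [h2m, Real.rpow_add' hx (by rw [← h2m]; positivity)]
        rw [hsplit]
        have hle : x ^ (m - β) ≤ T ^ (m - β) :=
          Real.rpow_le_rpow hx hxT.le (by linarith)
        calc x ^ (m + β) * x ^ (m - β) ≤ x ^ (m + β) * T ^ (m - β) :=
              mul_le_mul_of_nonneg_left hle (Real.rpow_nonneg hx _)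
        _ = T ^ (m - β) * x ^ (m + β) := mul_comm _ _
      · have hnm : x ∉ {y : ℝ | y < T} := hxT
        rw [Set.indicator_of_notMem hnm]
        exact mul_nonneg (Real.rpow_nonneg hTpos.le _) (Real.rpow_nonneg hx _)
    have hI1 : ∫ ω, G ω ∂P ≤ T ^ (m - β) := by
      calc ∫ ω, G ω ∂P ≤ ∫ ω, T ^ (m - β) * Φ ω ∂P :=
            integral_mono hGint (hΦint.const_mul _) hG1
      _ = T ^ (m - β) * ∫ ω, Φ ω ∂P := integral_const_mul _ _
      _ ≤ T ^ (m - β) * 1 := by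
            apply mul_le_mul_of_nonneg_left hΦ1 (Real.rpow_nonneg hTpos.le _)
      _ = T ^ (m - β) := mul_one _
    have hTeq : T ^ (m - β) = ε ^ (-(2 / m - δ) * (m - β)) := by
      rw [hTe, ← Real.rpow_mul hε0.le]
      congr 1
      simp only [hedef]
      ring
    have hrnn : 0 ≤ ε ^ (-(2 / m - δ) * (m - β)) := Real.rpow_nonneg hε0.le _
    calc variance (fun ω => Yind d ε δ (ρ₀ ω)) P
        + (∫ ω, Set.indicator {x | x < T} (fun x => x ^ (2 * m)) (ρ₀ ω) ∂P)
        ≤ 5 * ∫ ω, G ω ∂P := hmain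
    _ ≤ 5 * T ^ (m - β) := by linarith
    _ = 5 * ε ^ (-(2 / m - δ) * (m - β)) := by rw [hTeq]
    _ ≤ 10 * ε ^ (-(2 / m - δ) * (m - β)) := by linarith
  · -- case m ≤ β
    intro hmβ
    have hG2 : ∀ ω, G ω ≤ 1 + Φ ω := by
      intro ω
      simp only [hGdef, hΦdef]
      set x := ρ₀ ω with hxdef
      have hx : 0 ≤ x := hρnn ω
      have hΦnn' : (0 : ℝ) ≤ x ^ (m + β) := Real.rpow_nonneg hx _
      by_cases hxT : x < T
      · have hmem : x ∈ {y : ℝ | y < T} := hxT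
        rw [Set.indicator_of_mem hmem]
        by_cases hx1 : x ≤ 1
        · have : x ^ (2 * m) ≤ 1 := Real.rpow_le_one hx hx1 (by linarith)
          linarith
        · push_neg at hx1
          have : x ^ (2 * m) ≤ x ^ (m + β) :=
            Real.rpow_le_rpow_of_exponent_le hx1.le (by linarith)
          linarith
      · have hnm : x ∉ {y : ℝ | y < T} := hxT
        rw [Set.indicator_of_notMem hnm]
        linarith
    have hI2 : ∫ ω, G ω ∂P ≤ 2 := by
      calc ∫ ω, G ω ∂P ≤ ∫ ω, (1 + Φ ω) ∂P :=
            integral_mono hGint ((integrable_const 1).add hΦint) hG2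
      _ = (∫ _ω, (1 : ℝ) ∂P) + ∫ ω, Φ ω ∂P := integral_add (integrable_const 1) hΦint
      _ = 1 + ∫ ω, Φ ω ∂P := by simp
      _ ≤ 2 := by linarith
    calc variance (fun ω => Yind d ε δ (ρ₀ ω)) P
        + (∫ ω, Set.indicator {x | x < T} (fun x => x ^ (2 * m)) (ρ₀ ω) ∂P)
        ≤ 5 * ∫ ω, G ω ∂P := hmain
    _ ≤ 10 := by linarith
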